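/- arXiv:2504.15930 — 2 statements merged into one kernel-verified Lean document; each statement's English description precedes it below -/
import Mathlib

section
/- Let T(b) = k₀·b + t₀ for b < b*, and T(b) = k₁·b + t₁ for b ≥ b*, with 0 < k₀ < k₁, t₀, t₁ > 0, and continuity k₀·b* + t₀ = k₁·b* + t₁. Then T is strictly subadditive on positive reals: for all x, y > 0, T(x+y) < T(x) + T(y). -/
/-- Piecewise-linear batch iteration-time model. -/
noncomputable def T (k0 t0 k1 t1 bstar : ℝ) (b : ℝ) : ℝ :=
  if b < bstar then k0 * b + t0 else k1 * b + t1

theorem strictly_subadditive (k0 t0 k1 t1 bstar : ℝ)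
    (hk0 : 0 < k0) (hk01 : k0 < k1) (ht0 : 0 < t0) (ht1 : 0 < t1)
    (hcont : k0 * bstar + t0 = k1 * bstar + t1) :
    ∀ x y : ℝ, 0 < x → 0 < y →
      T k0 t0 k1 t1 bstar (x + y) < T k0 t0 k1 t1 bstar x + T k0 t0 k1 t1 bstar y := by
  intro x y hx hy
  unfold T
  split_ifs with h1 h2 h3 h2 h3 <;> nlinarith [mul_pos (sub_pos.2 hk01) hx, mul_pos (sub_pos.2 hk01) hy]
end

section
/- Let T(b) = k₀·b + t₀ for b < b* and T(b) = k₁·b + t₁ for b ≥ b*, with 0 < k₀ < k₁, t₀, t₁ > 0, continuity at b*. For any fixed total work S ∈ (0, B] and any way to split S into m ≥ 1 sequential batches of positive sizes, the total time Σ T(bᵢ) is minimized uniquely at m = 1. -/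
lemma sum_affine (k t : ℝ) (s : Multiset ℝ) :
    (s.map (fun b => k * b + t)).sum = k * s.sum + (Multiset.card s) * t := by
  induction s using Multiset.induction with
  | empty => simp
  | cons a s ih => simp [ih]; ring

/-- Among all ways to split a workload `S ∈ (0, B]` into sequential batches of
positive sizes, the single batch `{S}` uniquely minimizes total time: any split
into `m ≥ 2` batches takes strictly more time. -/
theorem single_batch_uniquely_optimal (k0 t0 k1 t1 bstar B S : ℝ)
    (hk0 : 0 < k0) (hk01 : k0 < k1) (ht0 : 0 < t0) (ht1 : 0 < t1)
    (hcont : k0 * bstar + t0 = k1 * bstar + t1)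
    (hS : 0 < S) (hSB : S ≤ B)
    (s : Multiset ℝ) (hpos : ∀ b ∈ s, 0 < b) (hsum : s.sum = S)
    (hcard : 2 ≤ Multiset.card s) :
    T k0 t0 k1 t1 bstar S < (s.map (T k0 t0 k1 t1 bstar)).sum := by
  have hlb0 : ∀ b : ℝ, k0 * b + t0 ≤ T k0 t0 k1 t1 bstar b := by
    intro b
    unfold T
    split_ifs with h
    · exact le_refl _
    · push_neg at h
      nlinarith
  have hlb1 : ∀ b : ℝ, k1 * b + t1 ≤ T k0 t0 k1 t1 bstar b := by
    intro b
    unfold T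
    split_ifs with h
    · nlinarith
    · exact le_refl _
  have hm : (2 : ℝ) ≤ (Multiset.card s : ℝ) := by exact_mod_cast hcard
  by_cases hSb : S < bstar
  · have hTS : T k0 t0 k1 t1 bstar S = k0 * S + t0 := if_pos hSb
    have hsum_le : (s.map (fun b => k0 * b + t0)).sum ≤
        (s.map (T k0 t0 k1 t1 bstar)).sum :=
      Multiset.sum_map_le_sum_map _ _ (fun b _ => hlb0 b)
    rw [sum_affine, hsum] at hsum_le
    rw [hTS]
    nlinarith
  · have hTS : T k0 t0 k1 t1 bstar S = k1 * S + t1 := if_neg hSb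
    have hsum_le : (s.map (fun b => k1 * b + t1)).sum ≤
        (s.map (T k0 t0 k1 t1 bstar)).sum :=
      Multiset.sum_map_le_sum_map _ _ (fun b _ => hlb1 b)
    rw [sum_affine, hsum] at hsum_le
    rw [hTS]
    nlinarith
end
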